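/- Let B be a commutative ring, p_0,...,p_n ∈ B[[t]] formal power series, and 0 ≤ r ≤ n. Let M be an (n+1)×(n+1) matrix over B[[x_0,...,x_r]] whose i-th row for 0 ≤ i ≤ r is (p_0(x_i),...,p_n(x_i)) and whose remaining n − r rows have entries in B. Then there is a unique power series g ∈ B[[x_0,...,x_r]] with det(M) = g · ∏_{0≤i<j≤r}(x_i − x_j). -/

import Mathlib

open Classical

set_option linter.unusedSectionVars false
set_option maxHeartbeats 1000000

/-- The multivariate power series `p(x_i)` obtained by substituting the single
variable `x_i` into a one-variable power series `p`. -/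
noncomputable def evalAtVar {B : Type*} [CommRing B] {σ : Type*} [DecidableEq σ]
    (i : σ) (p : PowerSeries B) : MvPowerSeries σ B :=
  fun d : σ →₀ ℕ =>
    if ∀ j : σ, j ≠ i → d j = 0 then PowerSeries.coeff (d i) p else 0

namespace Stmt4Aux

open Finset MvPowerSeries

variable {B : Type*} [CommRing B] {σ : Type*} [DecidableEq σ]

noncomputable def pt2 (k l : σ) (e : σ →₀ ℕ) (s u : ℕ) : σ →₀ ℕ :=
  (e.update k s).update l u

theorem pt2_apply (k l : σ) (e : σ →₀ ℕ) (s u : ℕ) (x : σ) :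
    pt2 k l e s u x = if x = l then u else if x = k then s else e x := by
  simp [pt2, Finsupp.coe_update, Function.update_apply]

noncomputable def pt (k l : σ) (e : σ →₀ ℕ) (t : ℕ) : σ →₀ ℕ :=
  (e.update k (e k - t)).update l t

theorem pt_apply (k l : σ) (e : σ →₀ ℕ) (t : ℕ) (x : σ) :
    pt k l e t x = if x = l then t else if x = k then e k - t else e x := by
  simp [pt, Finsupp.coe_update, Function.update_apply]

theorem pt_eq_pt2 (k l : σ) (e : σ →₀ ℕ) (t : ℕ) : pt k l e t = pt2 k l e (e k - t) t := rfl

theorem pt2_pt2 (k l : σ) (e : σ →₀ ℕ) (s' u' s u : ℕ) :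
    pt2 k l (pt2 k l e s' u') s u = pt2 k l e s u := by
  apply Finsupp.ext; intro x
  simp only [pt2_apply]
  split_ifs <;> simp_all

theorem pt2_eq_self (k l : σ) (hkl : k ≠ l) (e : σ →₀ ℕ) (s u : ℕ)
    (hs : s = e k) (hu : u = e l) : pt2 k l e s u = e := by
  apply Finsupp.ext; intro x
  simp only [pt2_apply]
  split_ifs <;> simp_all

noncomputable def lineSum (k l : σ) (f : MvPowerSeries σ B) (e : σ →₀ ℕ) : B :=
  ∑ t ∈ Finset.range (e k + 1), MvPowerSeries.coeff (pt k l e t) f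

noncomputable def collapse (k l : σ) (f : MvPowerSeries σ B) : MvPowerSeries σ B :=
  fun e => if e l = 0 then lineSum k l f e else 0

theorem coeff_collapse (k l : σ) (f : MvPowerSeries σ B) (e : σ →₀ ℕ) :
    MvPowerSeries.coeff e (collapse k l f) = if e l = 0 then lineSum k l f e else 0 := rfl

theorem coeff_X_mul' (i : σ) (h : MvPowerSeries σ B) (d : σ →₀ ℕ) :
    MvPowerSeries.coeff d (MvPowerSeries.X i * h)
      = if 1 ≤ d i then MvPowerSeries.coeff (d - Finsupp.single i 1) h else 0 := by
  rw [MvPowerSeries.X_def, MvPowerSeries.coeff_monomial_mul]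
  simp [Finsupp.single_le_iff]

theorem collapse_sub (k l : σ) (f g : MvPowerSeries σ B) :
    collapse k l (f - g) = collapse k l f - collapse k l g := by
  apply MvPowerSeries.ext; intro e
  simp only [coeff_collapse, lineSum, map_sub, Finset.sum_sub_distrib]
  split <;> simp

theorem collapse_X_mul (k l i : σ) (hkl : k ≠ l) (h : MvPowerSeries σ B) :
    collapse k l (MvPowerSeries.X i * h)
      = MvPowerSeries.X (if i = l then k else i) * collapse k l h := by
  have hφl : (if i = l then k else i) ≠ l := by split_ifs with hh; exacts [hkl, hh]
  apply MvPowerSeries.ext; intro e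
  rw [coeff_collapse, coeff_X_mul']
  by_cases hel : e l = 0
  swap
  · rw [if_neg hel]
    generalize hj : (if i = l then k else i) = j at hφl ⊢
    by_cases h1 : 1 ≤ e j
    · rw [if_pos h1, coeff_collapse, if_neg]
      rw [Finsupp.tsub_apply, Finsupp.single_apply, if_neg hφl]
      omega
    · rw [if_neg h1]
  · rw [if_pos hel]
    simp only [lineSum]
    by_cases hil : i = l
    · -- i = l ; target variable is k
      rw [hil]
      simp only [eq_self_iff_true, if_true]
      have hterm : ∀ t ∈ Finset.range (e k + 1),
          MvPowerSeries.coeff (pt k l e t) (MvPowerSeries.X l * h)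
          = if 1 ≤ t then
              MvPowerSeries.coeff (pt k l (e - Finsupp.single k 1) (t - 1)) h else 0 := by
        intro t _
        rw [coeff_X_mul', pt_apply, if_pos rfl]
        split_ifs with ht
        · have hdd : pt k l e t - Finsupp.single l 1
              = pt k l (e - Finsupp.single k 1) (t - 1) := by
            apply Finsupp.ext; intro x
            simp only [Finsupp.tsub_apply, pt_apply, Finsupp.single_apply]
            split_ifs <;> first | omega | simp_all | (simp_all; omega)
          rw [hdd]
        · rfl
      rw [Finset.sum_congr rfl hterm, Finset.sum_range_succ']
      have h0 : (if 1 ≤ 0 then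
          MvPowerSeries.coeff (pt k l (e - Finsupp.single k 1) (0 - 1)) h else 0) = 0 := by
        rw [if_neg (by omega)]
      rw [h0, add_zero]
      have hsh : ∀ t ∈ Finset.range (e k),
          (if 1 ≤ t + 1 then
            MvPowerSeries.coeff (pt k l (e - Finsupp.single k 1) (t + 1 - 1)) h else 0)
          = MvPowerSeries.coeff (pt k l (e - Finsupp.single k 1) t) h := by
        intro t _
        rw [if_pos (by omega)]
        congr 1
      rw [Finset.sum_congr rfl hsh]
      have hl0 : ((e - Finsupp.single k 1 : _ →₀ _)) l = 0 := by
        rw [Finsupp.tsub_apply, Finsupp.single_apply, if_neg hkl]; omega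
      have hk1 : ((e - Finsupp.single k 1 : _ →₀ _)) k = e k - 1 := by
        rw [Finsupp.tsub_apply, Finsupp.single_apply, if_pos rfl]
      by_cases hek : 1 ≤ e k
      · rw [if_pos hek, coeff_collapse, if_pos hl0]
        simp only [lineSum, hk1]
        rw [show e k - 1 + 1 = e k from by omega]
      · rw [if_neg hek, show e k = 0 from by omega]
        simp
    · by_cases hik : i = k
      · -- i = k
        rw [hik]
        simp only [if_neg hkl]
        have hterm : ∀ t ∈ Finset.range (e k + 1),
            MvPowerSeries.coeff (pt k l e t) (MvPowerSeries.X k * h)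
            = if t < e k then
                MvPowerSeries.coeff (pt k l (e - Finsupp.single k 1) t) h else 0 := by
          intro t _
          rw [coeff_X_mul', pt_apply, if_neg hkl, if_pos rfl]
          simp only [show (1 ≤ e k - t) ↔ (t < e k) from by omega]
          split_ifs with ht
          · have hdd : pt k l e t - Finsupp.single k 1
                = pt k l (e - Finsupp.single k 1) t := by
              apply Finsupp.ext; intro x
              simp only [Finsupp.tsub_apply, pt_apply, Finsupp.single_apply]
              split_ifs <;> first | omega | simp_all | (simp_all; omega)
            rw [hdd]
          · rfl
        rw [Finset.sum_congr rfl hterm, Finset.sum_range_succ, if_neg (lt_irrefl _), add_zero]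
        have hsh : ∀ t ∈ Finset.range (e k),
            (if t < e k then
              MvPowerSeries.coeff (pt k l (e - Finsupp.single k 1) t) h else 0)
            = MvPowerSeries.coeff (pt k l (e - Finsupp.single k 1) t) h := by
          intro t ht
          rw [if_pos (Finset.mem_range.mp ht)]
        rw [Finset.sum_congr rfl hsh]
        have hl0 : ((e - Finsupp.single k 1 : _ →₀ _)) l = 0 := by
          rw [Finsupp.tsub_apply, Finsupp.single_apply, if_neg hkl]; omega
        have hk1 : ((e - Finsupp.single k 1 : _ →₀ _)) k = e k - 1 := by
          rw [Finsupp.tsub_apply, Finsupp.single_apply, if_pos rfl]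
        by_cases hek : 1 ≤ e k
        · rw [if_pos hek, coeff_collapse, if_pos hl0]
          simp only [lineSum, hk1]
          rw [show e k - 1 + 1 = e k from by omega]
        · rw [if_neg hek, show e k = 0 from by omega]
          simp
      · -- i ∉ {k, l}
        simp only [if_neg hil]
        have hterm : ∀ t ∈ Finset.range (e k + 1),
            MvPowerSeries.coeff (pt k l e t) (MvPowerSeries.X i * h)
            = if 1 ≤ e i then
                MvPowerSeries.coeff (pt k l (e - Finsupp.single i 1) t) h else 0 := by
          intro t _
          rw [coeff_X_mul', pt_apply, if_neg hil, if_neg hik]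
          split_ifs with ht
          · have hdd : pt k l e t - Finsupp.single i 1
                = pt k l (e - Finsupp.single i 1) t := by
              apply Finsupp.ext; intro x
              simp only [Finsupp.tsub_apply, pt_apply, Finsupp.single_apply]
              split_ifs <;> first | omega | simp_all | (simp_all; omega)
            rw [hdd]
          · rfl
        rw [Finset.sum_congr rfl hterm]
        have hl0 : ((e - Finsupp.single i 1 : _ →₀ _)) l = 0 := by
          rw [Finsupp.tsub_apply, Finsupp.single_apply, if_neg hil]; omega
        have hk1 : ((e - Finsupp.single i 1 : _ →₀ _)) k = e k := by
          rw [Finsupp.tsub_apply, Finsupp.single_apply, if_neg hik]; omega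
        by_cases hei : 1 ≤ e i
        · simp only [if_pos hei]
          rw [coeff_collapse, if_pos hl0]
          simp only [lineSum, hk1]
        · simp only [if_neg hei]
          simp

theorem X_sub_X_regular (a b : σ) (hab : a ≠ b) (h : MvPowerSeries σ B)
    (H : (MvPowerSeries.X a - MvPowerSeries.X b) * h = 0) : h = 0 := by
  have key : ∀ d : σ →₀ ℕ,
      (if 1 ≤ d a then MvPowerSeries.coeff (d - Finsupp.single a 1) h else 0)
      = (if 1 ≤ d b then MvPowerSeries.coeff (d - Finsupp.single b 1) h else 0) := by
    intro d
    have h2 := congrArg (MvPowerSeries.coeff d) H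
    rw [sub_mul, map_sub, coeff_X_mul', coeff_X_mul', map_zero, sub_eq_zero] at h2
    exact h2
  have main : ∀ m : ℕ, ∀ e : σ →₀ ℕ, e b = m → MvPowerSeries.coeff e h = 0 := by
    intro m
    induction m with
    | zero =>
      intro e he
      have hc := key (e + Finsupp.single a 1)
      have ha1 : 1 ≤ (e + Finsupp.single a 1 : _ →₀ _) a := by
        rw [Finsupp.add_apply, Finsupp.single_apply, if_pos rfl]; omega
      have hb1 : ¬ 1 ≤ (e + Finsupp.single a 1 : _ →₀ _) b := by
        rw [Finsupp.add_apply, Finsupp.single_apply, if_neg hab]; omega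
      rw [if_pos ha1, if_neg hb1, add_tsub_cancel_right] at hc
      exact hc
    | succ m ih =>
      intro e he
      have hc := key (e + Finsupp.single a 1)
      have ha1 : 1 ≤ (e + Finsupp.single a 1 : _ →₀ _) a := by
        rw [Finsupp.add_apply, Finsupp.single_apply, if_pos rfl]; omega
      have hb1 : 1 ≤ (e + Finsupp.single a 1 : _ →₀ _) b := by
        rw [Finsupp.add_apply, Finsupp.single_apply, if_neg hab]; omega
      rw [if_pos ha1, if_pos hb1, add_tsub_cancel_right] at hc
      rw [hc]
      apply ih
      rw [Finsupp.tsub_apply, Finsupp.add_apply, Finsupp.single_apply, Finsupp.single_apply,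
        if_neg hab, if_pos rfl]
      omega
  apply MvPowerSeries.ext; intro e
  rw [map_zero]
  exact main (e b) e rfl

theorem exists_quot (k l : σ) (hkl : k ≠ l) (f : MvPowerSeries σ B)
    (H : ∀ e : σ →₀ ℕ, e l = 0 → lineSum k l f e = 0) :
    ∃ g, f = (MvPowerSeries.X k - MvPowerSeries.X l) * g := by
  refine ⟨fun e => ∑ t ∈ Finset.range (e l + 1),
      MvPowerSeries.coeff (pt2 k l e (e k + 1 + t) (e l - t)) f, ?_⟩
  set G : MvPowerSeries σ B := fun e => ∑ t ∈ Finset.range (e l + 1),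
      MvPowerSeries.coeff (pt2 k l e (e k + 1 + t) (e l - t)) f with hG
  have hGc : ∀ m : σ →₀ ℕ, MvPowerSeries.coeff m G
      = ∑ t ∈ Finset.range (m l + 1),
        MvPowerSeries.coeff (pt2 k l m (m k + 1 + t) (m l - t)) f := fun _ => rfl
  apply MvPowerSeries.ext; intro d
  rw [sub_mul, map_sub, coeff_X_mul', coeff_X_mul']
  have hdkl : (d - Finsupp.single k 1 : _ →₀ _) l = d l := by
    rw [Finsupp.tsub_apply, Finsupp.single_apply, if_neg hkl]; omega
  have hdkk : (d - Finsupp.single k 1 : _ →₀ _) k = d k - 1 := by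
    rw [Finsupp.tsub_apply, Finsupp.single_apply, if_pos rfl]
  have hdll : (d - Finsupp.single l 1 : _ →₀ _) l = d l - 1 := by
    rw [Finsupp.tsub_apply, Finsupp.single_apply, if_pos rfl]
  have hdlk : (d - Finsupp.single l 1 : _ →₀ _) k = d k := by
    rw [Finsupp.tsub_apply, Finsupp.single_apply, if_neg (Ne.symm hkl)]; omega
  have hsubk : ∀ s u, pt2 k l (d - Finsupp.single k 1) s u = pt2 k l d s u := by
    intro s u; apply Finsupp.ext; intro x
    simp only [pt2_apply, Finsupp.tsub_apply, Finsupp.single_apply]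
    split_ifs <;> first | rfl | omega | simp_all
  have hsubl : ∀ s u, pt2 k l (d - Finsupp.single l 1) s u = pt2 k l d s u := by
    intro s u; apply Finsupp.ext; intro x
    simp only [pt2_apply, Finsupp.tsub_apply, Finsupp.single_apply]
    split_ifs <;> first | rfl | omega | simp_all
  by_cases hdk : 1 ≤ d k
  · by_cases hdl : 1 ≤ d l
    · -- main case
      rw [if_pos hdk, if_pos hdl, hGc, hGc]
      have e1 : ∀ t ∈ Finset.range ((d - Finsupp.single k 1 : _ →₀ _) l + 1),
          MvPowerSeries.coeff (pt2 k l (d - Finsupp.single k 1)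
            ((d - Finsupp.single k 1 : _ →₀ _) k + 1 + t)
            ((d - Finsupp.single k 1 : _ →₀ _) l - t)) f
          = MvPowerSeries.coeff (pt2 k l d (d k + t) (d l - t)) f := by
        intro t _
        rw [hsubk, hdkk, hdkl, show d k - 1 + 1 + t = d k + t from by omega]
      have e2 : ∀ t ∈ Finset.range ((d - Finsupp.single l 1 : _ →₀ _) l + 1),
          MvPowerSeries.coeff (pt2 k l (d - Finsupp.single l 1)
            ((d - Finsupp.single l 1 : _ →₀ _) k + 1 + t)
            ((d - Finsupp.single l 1 : _ →₀ _) l - t)) f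
          = MvPowerSeries.coeff (pt2 k l d (d k + (t + 1)) (d l - (t + 1))) f := by
        intro t _
        rw [hsubl, hdlk, hdll, show d k + 1 + t = d k + (t + 1) from by omega,
          show d l - 1 - t = d l - (t + 1) from by omega]
      rw [Finset.sum_congr rfl e1, Finset.sum_congr rfl e2]
      rw [hdkl, hdll, show d l - 1 + 1 = d l from by omega]
      rw [Finset.sum_range_succ']
      rw [show pt2 k l d (d k + 0) (d l - 0) = d from by
        apply pt2_eq_self k l hkl <;> omega]
      ring
    · -- d l = 0
      rw [if_pos hdk, if_neg hdl, hGc]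
      have hdl0 : d l = 0 := by omega
      rw [hdkl, hdl0]
      rw [Finset.sum_range_one, hsubk, hdkk]
      rw [show pt2 k l d (d k - 1 + 1 + 0) (0 - 0) = d from by
        apply pt2_eq_self k l hkl <;> omega]
      ring
  · by_cases hdl : 1 ≤ d l
    · -- d k = 0
      rw [if_neg hdk, if_pos hdl, hGc]
      have hdk0 : d k = 0 := by omega
      have hline := H (pt2 k l d (d l) 0) (by rw [pt2_apply, if_pos rfl])
      have hpk : (pt2 k l d (d l) 0) k = d l := by
        rw [pt2_apply, if_neg hkl, if_pos rfl]
      rw [lineSum, hpk] at hline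
      have e3 : ∀ t ∈ Finset.range (d l + 1),
          MvPowerSeries.coeff (pt k l (pt2 k l d (d l) 0) t) f
          = MvPowerSeries.coeff (pt2 k l d (d l - t) t) f := by
        intro t _
        rw [pt_eq_pt2, hpk, pt2_pt2]
      rw [Finset.sum_congr rfl e3, Finset.sum_range_succ] at hline
      rw [show pt2 k l d (d l - d l) (d l) = d from by
        apply pt2_eq_self k l hkl <;> omega] at hline
      have hrefl := Finset.sum_range_reflect
        (fun t => MvPowerSeries.coeff (pt2 k l d (d l - t) t) f) (d l)
      have e4 : ∀ t ∈ Finset.range (d l),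
          MvPowerSeries.coeff (pt2 k l d (d l - (d l - 1 - t)) (d l - 1 - t)) f
          = MvPowerSeries.coeff (pt2 k l d (d k + 1 + t) (d l - 1 - t)) f := by
        intro t ht
        rw [show d l - (d l - 1 - t) = d k + 1 + t from by
          have := Finset.mem_range.mp ht; omega]
      rw [Finset.sum_congr rfl e4] at hrefl
      have e5 : ∀ t ∈ Finset.range (d l - 1 + 1),
          MvPowerSeries.coeff (pt2 k l (d - Finsupp.single l 1)
            ((d - Finsupp.single l 1 : _ →₀ _) k + 1 + t)
            ((d - Finsupp.single l 1 : _ →₀ _) l - t)) f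
          = MvPowerSeries.coeff (pt2 k l d (d k + 1 + t) (d l - 1 - t)) f := by
        intro t _
        rw [hsubl, hdlk, hdll]
      rw [hdll, show d l - 1 + 1 = d l from by omega] at e5 ⊢
      rw [Finset.sum_congr rfl e5, hrefl]
      linear_combination hline
    · -- d k = d l = 0
      rw [if_neg hdk, if_neg hdl]
      have hdl0 : d l = 0 := by omega
      have hdk0 : d k = 0 := by omega
      have hline := H d hdl0
      rw [lineSum, hdk0, Finset.sum_range_one, pt_eq_pt2] at hline
      rw [show pt2 k l d (d k - 0) 0 = d from by
        apply pt2_eq_self k l hkl <;> omega] at hline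
      rw [hline]
      ring

theorem collapse_X_sub_X_mul (k l i j : σ) (hkl : k ≠ l) (g : MvPowerSeries σ B) :
    collapse k l ((MvPowerSeries.X i - MvPowerSeries.X j) * g)
      = (MvPowerSeries.X (if i = l then k else i)
          - MvPowerSeries.X (if j = l then k else j)) * collapse k l g := by
  rw [sub_mul, collapse_sub, collapse_X_mul k l i hkl, collapse_X_mul k l j hkl, sub_mul]

theorem dvd_iff_collapse_eq_zero (k l : σ) (hkl : k ≠ l) (f : MvPowerSeries σ B) :
    (MvPowerSeries.X k - MvPowerSeries.X l) ∣ f ↔ collapse k l f = 0 := by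
  constructor
  · rintro ⟨g, rfl⟩
    rw [collapse_X_sub_X_mul k l k l hkl g, ite_self, if_pos rfl, sub_self]
    exact zero_mul _
  · intro h0
    have H : ∀ e : (σ →₀ ℕ), e l = 0 → lineSum k l f e = 0 := by
      intro e he
      have hc : MvPowerSeries.coeff e (collapse k l f) = 0 := by rw [h0, map_zero]
      rwa [coeff_collapse, if_pos he] at hc
    exact exists_quot k l hkl f H

theorem dvd_cancel (k l i j : σ) (hkl : k ≠ l)
    (hφ : (if i = l then k else i) ≠ (if j = l then k else j))
    (g : MvPowerSeries σ B)
    (hd : (MvPowerSeries.X k - MvPowerSeries.X l)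
      ∣ (MvPowerSeries.X i - MvPowerSeries.X j) * g) :
    (MvPowerSeries.X k - MvPowerSeries.X l) ∣ g := by
  rw [dvd_iff_collapse_eq_zero k l hkl] at hd ⊢
  rw [collapse_X_sub_X_mul k l i j hkl g] at hd
  exact X_sub_X_regular _ _ hφ _ hd

theorem prod_dvd_of_forall_dvd {R : Type*} [CommRing R] {ι : Type*}
    (s : Finset ι) (a : ι → R) :
    ∀ f : R, (∀ i ∈ s, ∀ j ∈ s, i ≠ j → ∀ g : R, a i ∣ a j * g → a i ∣ g) →
      (∀ i ∈ s, a i ∣ f) → (∏ i ∈ s, a i) ∣ f := by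
  classical
  induction s using Finset.cons_induction with
  | empty => intro f _ _; simpa using one_dvd f
  | cons i s his ih =>
    intro f h2 h1
    obtain ⟨g, rfl⟩ := h1 i (Finset.mem_cons_self i s)
    rw [Finset.prod_cons]
    refine mul_dvd_mul_left _ (ih g ?_ ?_)
    · intro x hx y hy hxy gg hgg
      exact h2 x (Finset.mem_cons_of_mem hx) y (Finset.mem_cons_of_mem hy) hxy gg hgg
    · intro x hx
      refine h2 x (Finset.mem_cons_of_mem hx) i (Finset.mem_cons_self i s)
        (fun hh => his (hh ▸ hx)) g (h1 x (Finset.mem_cons_of_mem hx))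

theorem prod_regular {R : Type*} [CommRing R] {ι : Type*}
    (s : Finset ι) (a : ι → R) :
    (∀ i ∈ s, ∀ g : R, a i * g = 0 → g = 0) →
      ∀ g : R, (∏ i ∈ s, a i) * g = 0 → g = 0 := by
  classical
  induction s using Finset.cons_induction with
  | empty => intro _ g hg; simpa using hg
  | cons i s his ih =>
    intro h g hg
    rw [Finset.prod_cons, mul_assoc] at hg
    exact ih (fun x hx => h x (Finset.mem_cons_of_mem hx)) g
      (h i (Finset.mem_cons_self i s) _ hg)

theorem coeff_evalAtVar (i : σ) (p : PowerSeries B) (d : σ →₀ ℕ) :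
    MvPowerSeries.coeff d (evalAtVar i p)
      = if ∀ j : σ, j ≠ i → d j = 0 then PowerSeries.coeff (d i) p else 0 := rfl

theorem collapse_eval (k l : σ) (hkl : k ≠ l) (p : PowerSeries B) :
    collapse k l (evalAtVar k p - evalAtVar l p) = 0 := by
  apply MvPowerSeries.ext; intro e
  rw [coeff_collapse, map_zero]
  split_ifs with hel
  · simp only [lineSum, map_sub, Finset.sum_sub_distrib]
    by_cases hsupp : ∀ x : σ, x ≠ k → x ≠ l → e x = 0
    · have h1 : ∑ t ∈ Finset.range (e k + 1),
          MvPowerSeries.coeff (pt k l e t) (evalAtVar k p)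
          = PowerSeries.coeff (e k) p := by
        rw [Finset.sum_eq_single 0]
        · rw [coeff_evalAtVar, if_pos]
          · rw [show pt k l e 0 k = e k from by
              rw [pt_apply, if_neg hkl, if_pos rfl]; omega]
          · intro j hj
            rw [pt_apply]
            by_cases hjl : j = l
            · rw [if_pos hjl]
            · rw [if_neg hjl, if_neg hj]
              exact hsupp j hj hjl
        · intro t _ ht0
          rw [coeff_evalAtVar, if_neg]
          intro hall
          exact ht0 (by have hl2 := hall l (Ne.symm hkl); rwa [pt_apply, if_pos rfl] at hl2)
        · intro h0; exact absurd (Finset.mem_range.mpr (by omega)) h0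
      have h2 : ∑ t ∈ Finset.range (e k + 1),
          MvPowerSeries.coeff (pt k l e t) (evalAtVar l p)
          = PowerSeries.coeff (e k) p := by
        rw [Finset.sum_eq_single (e k)]
        · rw [coeff_evalAtVar, if_pos]
          · rw [show pt k l e (e k) l = e k from by rw [pt_apply, if_pos rfl]]
          · intro j hj
            rw [pt_apply, if_neg hj]
            by_cases hjk : j = k
            · rw [if_pos hjk]; omega
            · rw [if_neg hjk]; exact hsupp j hjk hj
        · intro t hmem ht0
          rw [coeff_evalAtVar, if_neg]
          intro hall
          have hk2 := hall k hkl
          rw [pt_apply, if_neg hkl, if_pos rfl] at hk2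
          have := Finset.mem_range.mp hmem
          omega
        · intro h0; exact absurd (Finset.mem_range.mpr (by omega)) h0
      rw [h1, h2, sub_self]
    · push_neg at hsupp
      obtain ⟨x0, hx0k, hx0l, hx0⟩ := hsupp
      have hz : ∀ (i : σ), i = k ∨ i = l → ∀ t ∈ Finset.range (e k + 1),
          MvPowerSeries.coeff (pt k l e t) (evalAtVar i p) = 0 := by
        intro i hi t _
        rw [coeff_evalAtVar, if_neg]
        intro hall
        have hx0i : x0 ≠ i := by rcases hi with rfl | rfl; exacts [hx0k, hx0l]
        have hx2 := hall x0 hx0i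
        rw [pt_apply, if_neg hx0l, if_neg hx0k] at hx2
        exact hx0 hx2
      rw [Finset.sum_eq_zero (hz k (Or.inl rfl)), Finset.sum_eq_zero (hz l (Or.inr rfl)),
        sub_self]
  · rfl

end Stmt4Aux

/-- Let `M` be an `(n+1)×(n+1)` matrix over `B[[x_0,…,x_r]]` whose rows
`0,…,r` are `(p_0(x_i),…,p_n(x_i))` and whose remaining rows are constant
(entries in `B`). Then there is a unique `g ∈ B[[x_0,…,x_r]]` with
`det M = g ⬝ ∏_{0 ≤ i < j ≤ r} (x_i - x_j)`. -/
theorem stmt4 {B : Type*} [CommRing B] (n r : ℕ) (hr : r ≤ n)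
    (p : Fin (n + 1) → PowerSeries B)
    (M : Matrix (Fin (n + 1)) (Fin (n + 1)) (MvPowerSeries (Fin (r + 1)) B))
    (hrows : ∀ i : Fin (n + 1), ∀ h : (i : ℕ) < r + 1, ∀ j : Fin (n + 1),
      M i j = evalAtVar (⟨(i : ℕ), h⟩ : Fin (r + 1)) (p j))
    (hconst : ∀ i : Fin (n + 1), r + 1 ≤ (i : ℕ) → ∀ j : Fin (n + 1),
      ∃ b : B, M i j = MvPowerSeries.C b) :
    ∃! g : MvPowerSeries (Fin (r + 1)) B,
      M.det = g * ∏ i : Fin (r + 1), ∏ j ∈ Finset.Ioi i,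
        (MvPowerSeries.X i - MvPowerSeries.X j) := by
  classical
  have hprodeq : (∏ i : Fin (r + 1), ∏ j ∈ Finset.Ioi i,
        (MvPowerSeries.X i - MvPowerSeries.X j : MvPowerSeries (Fin (r + 1)) B))
      = ∏ x ∈ (Finset.univ.sigma fun i : Fin (r + 1) => Finset.Ioi i),
        (MvPowerSeries.X x.1 - MvPowerSeries.X x.2 : MvPowerSeries (Fin (r + 1)) B) :=
    Finset.prod_sigma' _ _ _
  -- each Vandermonde factor divides the determinant
  have hdvd : ∀ k l : Fin (r + 1), k < l →
      (MvPowerSeries.X k - MvPowerSeries.X l : MvPowerSeries (Fin (r + 1)) B) ∣ M.det := by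
    intro k l hkl'
    have hkl : k ≠ l := ne_of_lt hkl'
    have hkn : (k : ℕ) < n + 1 := by have := k.isLt; omega
    have hln : (l : ℕ) < n + 1 := by have := l.isLt; omega
    set k' : Fin (n + 1) := ⟨(k : ℕ), hkn⟩ with hk'
    set l' : Fin (n + 1) := ⟨(l : ℕ), hln⟩ with hl'
    have hkr : (k' : ℕ) < r + 1 := k.isLt
    have hlr : (l' : ℕ) < r + 1 := l.isLt
    have hrowk : ∀ j, M k' j = evalAtVar k (p j) := by
      intro j
      have h2 := hrows k' hkr j
      have h3 : (⟨(k' : ℕ), hkr⟩ : Fin (r + 1)) = k := Fin.ext rfl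
      rwa [h3] at h2
    have hrowl : ∀ j, M l' j = evalAtVar l (p j) := by
      intro j
      have h2 := hrows l' hlr j
      have h3 : (⟨(l' : ℕ), hlr⟩ : Fin (r + 1)) = l := Fin.ext rfl
      rwa [h3] at h2
    have hK'L' : k' ≠ l' := by
      intro hh
      have hv : (k' : ℕ) = (l' : ℕ) := congrArg Fin.val hh
      exact hkl (Fin.ext hv)
    choose q hq using fun j : Fin (n + 1) =>
      (Stmt4Aux.dvd_iff_collapse_eq_zero k l hkl
        (evalAtVar k (p j) - evalAtVar l (p j))).mpr (Stmt4Aux.collapse_eval k l hkl (p j))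
    have hMrow : M l' = M k' + fun j =>
        (MvPowerSeries.X k - MvPowerSeries.X l) * (-(q j)) := by
      funext j
      simp only [Pi.add_apply]
      rw [hrowl j, hrowk j, mul_neg, ← hq j]
      ring
    have hdet : M.det = (M.updateRow l' (M k')).det
        + (M.updateRow l' fun j =>
            (MvPowerSeries.X k - MvPowerSeries.X l) * (-(q j))).det := by
      conv_lhs => rw [← Matrix.updateRow_eq_self M l', hMrow]
      rw [Matrix.det_updateRow_add]
    have hzero : (M.updateRow l' (M k')).det = 0 := by
      apply Matrix.det_zero_of_row_eq hK'L'
      rw [Matrix.updateRow_ne hK'L', Matrix.updateRow_self]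
    have hsmul : (M.updateRow l' fun j =>
        (MvPowerSeries.X k - MvPowerSeries.X l) * (-(q j))).det
        = (MvPowerSeries.X k - MvPowerSeries.X l)
          * (M.updateRow l' fun j => -(q j)).det := by
      rw [show (fun j => (MvPowerSeries.X k - MvPowerSeries.X l) * (-(q j)))
          = (MvPowerSeries.X k - MvPowerSeries.X l : MvPowerSeries (Fin (r + 1)) B)
            • (fun j => -(q j)) from rfl,
        Matrix.det_updateRow_smul]
    exact ⟨_, by rw [hdet, hzero, zero_add, hsmul]⟩
  have hVdvd : (∏ i : Fin (r + 1), ∏ j ∈ Finset.Ioi i,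
      (MvPowerSeries.X i - MvPowerSeries.X j : MvPowerSeries (Fin (r + 1)) B)) ∣ M.det := by
    rw [hprodeq]
    apply Stmt4Aux.prod_dvd_of_forall_dvd
    · intro x hx y hy hxy g hdd
      have hx2 : x.1 < x.2 := Finset.mem_Ioi.mp (Finset.mem_sigma.mp hx).2
      have hy2 : y.1 < y.2 := Finset.mem_Ioi.mp (Finset.mem_sigma.mp hy).2
      refine Stmt4Aux.dvd_cancel x.1 x.2 y.1 y.2 (ne_of_lt hx2) ?_ g hdd
      have hne : ¬ (y.1 = x.1 ∧ y.2 = x.2) := by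
        rintro ⟨h1, h2⟩
        exact hxy (Sigma.ext h1 (heq_of_eq h2)).symm
      split_ifs with h1 h2 h2 <;>
        simp only [ne_eq, Fin.ext_iff, Fin.lt_def, not_and] at * <;> omega
    · intro x hx
      exact hdvd x.1 x.2 (Finset.mem_Ioi.mp (Finset.mem_sigma.mp hx).2)
  have hreg := Stmt4Aux.prod_regular
    (Finset.univ.sigma fun i : Fin (r + 1) => Finset.Ioi i)
    (fun x => (MvPowerSeries.X x.1 - MvPowerSeries.X x.2 : MvPowerSeries (Fin (r + 1)) B))
    (fun x hx g hg => Stmt4Aux.X_sub_X_regular x.1 x.2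
      (ne_of_lt (Finset.mem_Ioi.mp (Finset.mem_sigma.mp hx).2)) g hg)
  obtain ⟨g, hg⟩ := hVdvd
  refine ⟨g, by rw [hg, mul_comm], ?_⟩
  intro y hy
  have h0 : (∏ x ∈ (Finset.univ.sigma fun i : Fin (r + 1) => Finset.Ioi i),
      (MvPowerSeries.X x.1 - MvPowerSeries.X x.2 : MvPowerSeries (Fin (r + 1)) B))
      * (y - g) = 0 := by
    have h1 : y * (∏ i : Fin (r + 1), ∏ j ∈ Finset.Ioi i,
        (MvPowerSeries.X i - MvPowerSeries.X j : MvPowerSeries (Fin (r + 1)) B))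
        = (∏ i : Fin (r + 1), ∏ j ∈ Finset.Ioi i,
          (MvPowerSeries.X i - MvPowerSeries.X j : MvPowerSeries (Fin (r + 1)) B)) * g := by
      rw [← hy, hg]
    rw [← hprodeq]
    linear_combination h1
  have h2 := hreg (y - g) h0
  exact sub_eq_zero.mp h2
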